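/- Let f : A → B be a surjective quandle homomorphism and p : E → B a normal extension. Form the pullback E ×_B A with projections p₁, p₂. Then Eq(p₂) ∘ (Eq(p₁) ∩ ∼_{Inn(E×_B A)}) = (Eq(p₁) ∩ ∼_{Inn(E×_B A)}) ∘ Eq(p₂). -/

import Mathlib

/-- A quandle in the sense of the paper: a set with two binary operations
`act` (`◁`) and `inv` (`◁⁻¹`) satisfying idempotency, right invertibility
and (right) self-distributivity. -/
class Quandle' (A : Type*) where
  act : A → A → A
  inv : A → A → A
  idem : ∀ a, act a a = a
  inv_act : ∀ a b, inv (act a b) b = a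
  act_inv : ∀ a b, act (inv a b) b = a
  distrib : ∀ a b c, act (act a b) c = act (act a c) (act b c)

open Quandle'

/-- A quandle homomorphism preserves both operations. -/
def IsQuandleHom {A B : Type*} [Quandle' A] [Quandle' B] (f : A → B) : Prop :=
  (∀ a a', f (act a a') = act (f a) (f a')) ∧
  (∀ a a', f (inv a a') = inv (f a) (f a'))

/-- The right translation `ρ_b : a ↦ a ◁ b`, as a permutation of `A`. -/
def rho {A : Type*} [Quandle' A] (b : A) : Equiv.Perm A :=
  ⟨fun a => act a b, fun a => inv a b, fun a => inv_act a b, fun a => act_inv a b⟩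

/-- The group of inner automorphisms of a quandle, as a subgroup of `Equiv.Perm A`. -/
def Inn (A : Type*) [Quandle' A] : Subgroup (Equiv.Perm A) :=
  Subgroup.closure (Set.range (rho (A := A)))

/-- The orbit relation `∼_N` associated with a subgroup `N ≤ Perm A`. -/
def orbitRel {A : Type*} [Quandle' A] (N : Subgroup (Equiv.Perm A)) (a b : A) : Prop :=
  ∃ n ∈ N, n a = b

/-- Two elements are in the same connected component when they are in the
same orbit of `Inn A`. -/
def sameComponent {A : Type*} [Quandle' A] (a b : A) : Prop :=
  orbitRel (Inn A) a b

/-- Trivial extension: a surjective quandle homomorphism such that elements with the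
same image lying in the same connected component are equal (condition (T)). -/
def IsTrivialExt {A B : Type*} [Quandle' A] [Quandle' B] (f : A → B) : Prop :=
  Function.Surjective f ∧ IsQuandleHom f ∧
    ∀ a a', f a = f a' → sameComponent a a' → a = a'

/-- Evaluation of a word `a₀ ◁^{α₁} a₁ ◁^{α₂} ⋯ ◁^{αₙ} aₙ`; `true` stands for
exponent `1` and `false` for exponent `-1`. -/
def wordEval {A : Type*} [Quandle' A] (a₀ : A) (l : List (Bool × A)) : A :=
  l.foldl (fun x p => if p.1 then act x p.2 else inv x p.2) a₀

/-- Condition (N) characterizing normal extensions. -/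
def CondN {A B : Type*} [Quandle' A] [Quandle' B] (f : A → B) : Prop :=
  ∀ (a₀ : A) (l : List (Bool × A)), wordEval a₀ l = a₀ →
    ∀ (a₀' : A) (l' : List (Bool × A)), f a₀' = f a₀ →
      List.Forall₂ (fun p q => p.1 = q.1 ∧ f p.2 = f q.2) l l' →
      wordEval a₀' l' = a₀'

/-- Normal extension (via condition (N)). -/
def IsNormalExt {A B : Type*} [Quandle' A] [Quandle' B] (f : A → B) : Prop :=
  Function.Surjective f ∧ IsQuandleHom f ∧ CondN f

/-- Quandle covering in the sense of Eisermann (= central extension). -/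
def IsCovering {A B : Type*} [Quandle' A] [Quandle' B] (f : A → B) : Prop :=
  Function.Surjective f ∧ IsQuandleHom f ∧
    ∀ a a' c, f a = f a' → act c a = act c a'

/-- A congruence on a quandle: an equivalence relation compatible with both operations. -/
def IsCongruence {A : Type*} [Quandle' A] (r : A → A → Prop) : Prop :=
  Equivalence r ∧
    ∀ a a' b b', r a b → r a' b' → r (act a a') (act b b') ∧ r (inv a a') (inv b b')

/-- Relational composition: `(a,b) ∈ relComp S R` iff `∃ c, R a c ∧ S c b`. -/
def relComp {X : Type*} (S R : X → X → Prop) (a b : X) : Prop :=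
  ∃ c, R a c ∧ S c b

/-- The kernel congruence of a map. -/
def eqRel {A B : Type*} (f : A → B) (a a' : A) : Prop := f a = f a'

/-- The image of a relation along a map. -/
def imageRel {A B : Type*} (f : A → B) (R : A → A → Prop) (b b' : B) : Prop :=
  ∃ a a', R a a' ∧ f a = b ∧ f a' = b'

instance prodQuandle {A B : Type*} [Quandle' A] [Quandle' B] : Quandle' (A × B) where
  act p q := (act p.1 q.1, act p.2 q.2)
  inv p q := (inv p.1 q.1, inv p.2 q.2)
  idem p := Prod.ext (idem p.1) (idem p.2)
  inv_act p q := Prod.ext (inv_act p.1 q.1) (inv_act p.2 q.2)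
  act_inv p q := Prod.ext (act_inv p.1 q.1) (act_inv p.2 q.2)
  distrib p q r := Prod.ext (distrib p.1 q.1 r.1) (distrib p.2 q.2 r.2)

/-- The pullback of `f : A → C` and `g : B → C` as a set. -/
def Pullback {A B C : Type*} (f : A → C) (g : B → C) : Type _ :=
  { p : A × B // f p.1 = g p.2 }

/-- The quandle structure on a pullback of two quandle homomorphisms. -/
def pullbackQuandle {A B C : Type*} [Quandle' A] [Quandle' B] [Quandle' C]
    (f : A → C) (g : B → C) (hf : IsQuandleHom f) (hg : IsQuandleHom g) :
    Quandle' (Pullback f g) where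
  act p q := ⟨act p.1 q.1, by
    show f (act p.1.1 q.1.1) = g (act p.1.2 q.1.2)
    rw [hf.1, hg.1, p.2, q.2]⟩
  inv p q := ⟨inv p.1 q.1, by
    show f (inv p.1.1 q.1.1) = g (inv p.1.2 q.1.2)
    rw [hf.2, hg.2, p.2, q.2]⟩
  idem p := Subtype.ext (idem p.1)
  inv_act p q := Subtype.ext (inv_act p.1 q.1)
  act_inv p q := Subtype.ext (act_inv p.1 q.1)
  distrib p q r := Subtype.ext (distrib p.1 q.1 r.1)

/-- The congruence generated by a relation `R`. -/
def congClosure {A : Type*} [Quandle' A] (R : A → A → Prop) (a b : A) : Prop :=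
  ∀ S : A → A → Prop, IsCongruence S → (∀ x y, R x y → S x y) → S a b

/-- The congruence generated by `R`, as a setoid. -/
def congClosureSetoid {A : Type*} [Quandle' A] (R : A → A → Prop) : Setoid A :=
  ⟨congClosure R,
    ⟨fun a S hS _ => hS.1.refl a,
     fun h S hS hR => hS.1.symm (h S hS hR),
     fun h1 h2 S hS hR => hS.1.trans (h1 S hS hR) (h2 S hS hR)⟩⟩

/-- The quotient quandle by the congruence generated by `R`. -/
def quotQuandle {A : Type*} [Quandle' A] (R : A → A → Prop) :
    Quandle' (Quotient (congClosureSetoid R)) where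
  act := Quotient.map₂ act
    (fun _ _ h _ _ h' S hS hR => (hS.2 _ _ _ _ (h S hS hR) (h' S hS hR)).1)
  inv := Quotient.map₂ inv
    (fun _ _ h _ _ h' S hS hR => (hS.2 _ _ _ _ (h S hS hR) (h' S hS hR)).2)
  idem q := Quotient.inductionOn q fun a => congrArg (Quotient.mk _) (idem a)
  inv_act q r := Quotient.inductionOn₂ q r fun a b => congrArg (Quotient.mk _) (inv_act a b)
  act_inv q r := Quotient.inductionOn₂ q r fun a b => congrArg (Quotient.mk _) (act_inv a b)
  distrib q r s := Quotient.inductionOn₃ q r s fun a b c => congrArg (Quotient.mk _) (distrib a b c)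

/-- Reversed word with flipped exponents. -/
def flipWord {X : Type*} (l : List (Bool × X)) : List (Bool × X) :=
  l.reverse.map (fun q => (!q.1, q.2))

lemma wordEval_cons {X : Type*} [Quandle' X] (x : X) (q : Bool × X) (l : List (Bool × X)) :
    wordEval x (q :: l) = wordEval (if q.1 then act x q.2 else inv x q.2) l := rfl

lemma wordEval_append {X : Type*} [Quandle' X] (x : X) (l l' : List (Bool × X)) :
    wordEval x (l ++ l') = wordEval (wordEval x l) l' := by
  simp [wordEval, List.foldl_append]

lemma flipWord_flipWord {X : Type*} (l : List (Bool × X)) : flipWord (flipWord l) = l := by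
  unfold flipWord
  rw [← List.map_reverse, List.reverse_reverse, List.map_map]
  have h : ((fun q : Bool × X => (!q.1, q.2)) ∘ fun q => (!q.1, q.2)) = id := by
    funext q; simp
  rw [h, List.map_id]

lemma wordEval_flip {X : Type*} [Quandle' X] (x : X) (l : List (Bool × X)) :
    wordEval (wordEval x l) (flipWord l) = x := by
  induction l generalizing x with
  | nil => rfl
  | cons q l ih =>
    have hflip : flipWord (q :: l) = flipWord l ++ [(!q.1, q.2)] := by
      simp [flipWord]
    rw [wordEval_cons, hflip, wordEval_append, ih]
    obtain ⟨b, a⟩ := q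
    cases b <;> simp [wordEval, act_inv, inv_act]

lemma inn_word {X : Type*} [Quandle' X] {n : Equiv.Perm X} (hn : n ∈ Inn X) :
    ∃ l : List (Bool × X), ∀ x, n x = wordEval x l := by
  induction hn using Subgroup.closure_induction with
  | mem g hg =>
    obtain ⟨b, rfl⟩ := hg
    exact ⟨[(true, b)], fun x => rfl⟩
  | one => exact ⟨[], fun x => rfl⟩
  | mul a b _ _ iha ihb =>
    obtain ⟨la, hla⟩ := iha
    obtain ⟨lb, hlb⟩ := ihb
    refine ⟨lb ++ la, fun x => ?_⟩
    rw [wordEval_append, ← hlb, ← hla]; rfl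
  | inv a _ ih =>
    obtain ⟨l, hl⟩ := ih
    refine ⟨flipWord l, fun x => ?_⟩
    apply a.injective
    have h1 := wordEval_flip x (flipWord l)
    rw [flipWord_flipWord, ← hl] at h1
    rw [h1]
    exact a.apply_symm_apply x

lemma wordEval_proj {A B E : Type*} [Quandle' A] [Quandle' B] [Quandle' E]
    {p : E → B} {f : A → B} (hph : IsQuandleHom p) (hfh : IsQuandleHom f) :
    letI : Quandle' (Pullback p f) := pullbackQuandle p f hph hfh
    ∀ (l : List (Bool × Pullback p f)) (x : Pullback p f),
      (wordEval x l).1.1 = wordEval x.1.1 (l.map fun q => (q.1, q.2.1.1)) ∧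
      (wordEval x l).1.2 = wordEval x.1.2 (l.map fun q => (q.1, q.2.1.2)) := by
  letI : Quandle' (Pullback p f) := pullbackQuandle p f hph hfh
  intro l
  induction l with
  | nil => exact fun x => ⟨rfl, rfl⟩
  | cons q l ih =>
    intro x
    have h := ih (if q.1 then act x q.2 else inv x q.2)
    constructor
    · rw [wordEval_cons, h.1, List.map_cons, wordEval_cons]
      cases hq : q.1 <;> rfl
    · rw [wordEval_cons, h.2, List.map_cons, wordEval_cons]
      cases hq : q.1 <;> rfl

theorem stmt16 {A B E : Type*} [Quandle' A] [Quandle' B] [Quandle' E]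
    (f : A → B) (p : E → B) (hf : Function.Surjective f) (hfh : IsQuandleHom f)
    (hp : IsNormalExt p) :
    letI : Quandle' (Pullback p f) := pullbackQuandle p f hp.2.1 hfh
    relComp (eqRel (fun x : Pullback p f => x.1.2))
        (fun x y => eqRel (fun x : Pullback p f => x.1.1) x y ∧ sameComponent x y)
      = relComp (fun x y => eqRel (fun x : Pullback p f => x.1.1) x y ∧ sameComponent x y)
        (eqRel (fun x : Pullback p f => x.1.2)) := by
  letI : Quandle' (Pullback p f) := pullbackQuandle p f hp.2.1 hfh
  have hN := hp.2.2
  have hcomp := wordEval_proj (p := p) (f := f) hp.2.1 hfh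
  funext x y
  apply propext
  constructor
  · rintro ⟨c, ⟨h1, n, hn, hnx⟩, h2⟩
    have h1' : x.1.1 = c.1.1 := h1
    have h2' : c.1.2 = y.1.2 := h2
    obtain ⟨l, hl⟩ := inn_word hn
    set lE := l.map (fun q => (q.1, q.2.1.1)) with hlE
    set lA := l.map (fun q => (q.1, q.2.1.2)) with hlA
    have hE : wordEval x.1.1 lE = x.1.1 := by
      rw [← (hcomp l x).1, ← hl x, hnx]; exact h1'.symm
    have hpy : p y.1.1 = p x.1.1 := by
      rw [y.2, ← h2', ← c.2, ← h1']
    have hforall : List.Forall₂ (fun q r => q.1 = r.1 ∧ p q.2 = p r.2) lE lE :=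
      List.forall₂_same.2 fun q _ => ⟨rfl, rfl⟩
    have hE' : wordEval y.1.1 lE = y.1.1 := hN x.1.1 lE hE y.1.1 lE hpy hforall
    have hc' : p y.1.1 = f x.1.2 := by rw [hpy, x.2]
    refine ⟨⟨(y.1.1, x.1.2), hc'⟩, rfl, rfl, n, hn, ?_⟩
    apply Subtype.ext
    apply Prod.ext
    · show (n _).1.1 = y.1.1
      refine (congrArg (fun z : Pullback p f => z.1.1) (hl _)).trans (((hcomp l _).1).trans ?_)
      exact hE'
    · show (n _).1.2 = y.1.2
      refine (congrArg (fun z : Pullback p f => z.1.2) (hl _)).trans (((hcomp l _).2).trans ?_)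
      show wordEval x.1.2 lA = y.1.2
      rw [← (hcomp l x).2, ← hl x, hnx]; exact h2'
  · rintro ⟨c, h1, h2, n, hn, hnc⟩
    have h1' : x.1.2 = c.1.2 := h1
    have h2' : c.1.1 = y.1.1 := h2
    obtain ⟨l, hl⟩ := inn_word hn
    set lE := l.map (fun q => (q.1, q.2.1.1)) with hlE
    set lA := l.map (fun q => (q.1, q.2.1.2)) with hlA
    have hE : wordEval c.1.1 lE = c.1.1 := by
      rw [← (hcomp l c).1, ← hl c, hnc]; exact h2'.symm
    have hpx : p x.1.1 = p c.1.1 := by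
      rw [x.2, h1', c.2]
    have hforall : List.Forall₂ (fun q r => q.1 = r.1 ∧ p q.2 = p r.2) lE lE :=
      List.forall₂_same.2 fun q _ => ⟨rfl, rfl⟩
    have hE' : wordEval x.1.1 lE = x.1.1 := hN c.1.1 lE hE x.1.1 lE hpx hforall
    have hc'' : p x.1.1 = f y.1.2 := by rw [hpx, h2', y.2]
    refine ⟨⟨(x.1.1, y.1.2), hc''⟩, ⟨rfl, n, hn, ?_⟩, rfl⟩
    apply Subtype.ext
    apply Prod.ext
    · show (n x).1.1 = x.1.1
      rw [hl, (hcomp l x).1]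
      exact hE'
    · show (n x).1.2 = y.1.2
      rw [hl, (hcomp l x).2]
      show wordEval x.1.2 lA = y.1.2
      rw [h1', ← (hcomp l c).2, ← hl c, hnc]
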